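/- arXiv:2002.11205 — 4 statements merged into one kernel-verified Lean document; each statement's English description precedes it below -/
import Mathlib

section
/- Let G be a connected locally finite graph whose isoperimetric profile satisfies Φ(k) ≥ c·k^{(d-1)/d} for all k ≥ 1, for some constant c > 0 and some real d ≥ 2. Then for every function f : ℕ → ℕ with f(n) = o(n^{d-2}), G does not satisfy the {f(n)}-containment property. -/
open Filter Real

/-- The outer vertex boundary of a set of vertices: vertices outside `K`
adjacent to some vertex of `K`. -/
def SimpleGraph.outerBoundary {V : Type*} (G : SimpleGraph V) (K : Set V) : Set V :=
  {v | v ∉ K ∧ ∃ u ∈ K, G.Adj u v}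

/-- The (vertex) isoperimetric profile of a graph:
`Φ(k) = inf {|∂K| : K ⊆ V, |K| = k}`. -/
noncomputable def SimpleGraph.isoProfile {V : Type*} (G : SimpleGraph V) (k : ℕ) : ℕ :=
  sInf {m | ∃ K : Set V, K.Finite ∧ K.ncard = k ∧ (G.outerBoundary K).ncard = m}

/-- A valid play of the firefighter game on `G` against at most `f n` firefighters
deployed at step `n`. `K n` is the set of burning vertices at time `n`, and `P n`
is the cumulative set of protected vertices at time `n`: at each step at most
`f (n+1)` new vertices, none of them on fire, become protected, and then the fire
spreads to all unprotected neighbours of burning vertices. -/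
structure FireStrategy {V : Type*} (G : SimpleGraph V) (f : ℕ → ℕ) (K P : ℕ → Set V) : Prop where
  burning_finite : ∀ n, (K n).Finite
  protected_finite : ∀ n, (P n).Finite
  protected_zero : P 0 = ∅
  protected_mono : ∀ n, P n ⊆ P (n + 1)
  protected_card : ∀ n, (P (n + 1) \ P n).ncard ≤ f (n + 1)
  protected_not_burning : ∀ n, Disjoint (P (n + 1)) (K n)
  spread : ∀ n, K (n + 1) = K n ∪ (G.outerBoundary (K n) \ P (n + 1))

/-- `G` has the `{f(n)}`-containment property if every finite initial fire admits a
strategy protecting at most `f n` vertices at step `n` under which the set of burning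
vertices is eventually constant. -/
def HasContainment {V : Type*} (G : SimpleGraph V) (f : ℕ → ℕ) : Prop :=
  ∀ K₀ : Set V, K₀.Finite →
    ∃ K P : ℕ → Set V, K 0 = K₀ ∧ FireStrategy G f K P ∧ ∃ N, ∀ n, N ≤ n → K n = K N

/-- The Cayley graph of a group w.r.t. a finite (symmetric) set `S`. -/
def cayleyGraph {Γ : Type*} [Group Γ] (S : Finset Γ) : SimpleGraph Γ :=
  SimpleGraph.fromRel (fun g h => g⁻¹ * h ∈ S)

/-- The growth function of a group w.r.t. a finite generating set: the number of
elements expressible as a product of at most `n` generators, i.e. `|B_n(id)|` in the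
word metric. -/
noncomputable def growth {Γ : Type*} [Group Γ] (S : Finset Γ) (n : ℕ) : ℕ :=
  Set.ncard {g : Γ | ∃ l : List Γ, l.length ≤ n ∧ (∀ x ∈ l, x ∈ (S : Set Γ)) ∧ l.prod = g}

private lemma one_add_pow_le_aux (m : ℕ) : ∀ t : ℝ, 0 ≤ t → t ≤ 1 →
    (1 + t) ^ m ≤ 1 + ((2:ℝ) ^ m - 1) * t := by
  induction m with
  | zero => intro t h0 h1; simp
  | succ m ih =>
    intro t h0 h1
    have h2 : (1:ℝ) ≤ 2 ^ m := one_le_pow₀ (by norm_num)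
    have hih := ih t h0 h1
    have ht : t ^ 2 ≤ t := by nlinarith
    have hnn : (0:ℝ) ≤ 1 + t := by linarith
    calc (1+t) ^ (m+1) = (1+t)^m * (1+t) := pow_succ _ _
      _ ≤ (1 + ((2:ℝ)^m - 1)*t) * (1+t) := by nlinarith [pow_nonneg hnn m]
      _ ≤ 1 + ((2:ℝ)^(m+1) - 1)*t := by ring_nf; nlinarith

private lemma rpow_add_one_le {d : ℝ} (hd : 1 ≤ d) {x : ℝ} (hx : 1 ≤ x) :
    (x+1) ^ d ≤ x ^ d + 2 ^ (⌈d⌉₊ : ℕ) * x ^ (d-1) := by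
  have hx0 : (0:ℝ) < x := lt_of_lt_of_le one_pos hx
  have ht0 : (0:ℝ) ≤ 1/x := by positivity
  have ht1 : 1/x ≤ 1 := by rw [div_le_one hx0]; exact hx
  have hxe : x + 1 = x * (1 + 1/x) := by field_simp
  have h1 : (x+1)^d = x^d * (1 + 1/x)^d := by
    rw [hxe, Real.mul_rpow (le_of_lt hx0) (by linarith)]
  have h2 : (1 + 1/x)^d ≤ (1 + 1/x) ^ (⌈d⌉₊ : ℕ) := by
    rw [← Real.rpow_natCast (1 + 1/x) ⌈d⌉₊]
    exact Real.rpow_le_rpow_of_exponent_le (by linarith) (Nat.le_ceil d)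
  have h3 : (1 + 1/x) ^ (⌈d⌉₊:ℕ) ≤ 1 + ((2:ℝ)^(⌈d⌉₊:ℕ) - 1) * (1/x) :=
    one_add_pow_le_aux _ _ ht0 ht1
  have h4 : x ^ (d-1) = x ^ d / x := Real.rpow_sub_one (ne_of_gt hx0) d
  have hxd : (0:ℝ) < x ^ d := Real.rpow_pos_of_pos hx0 d
  have h2m : (1:ℝ) ≤ 2 ^ (⌈d⌉₊:ℕ) := one_le_pow₀ (by norm_num)
  calc (x+1)^d ≤ x^d * (1 + ((2:ℝ)^(⌈d⌉₊:ℕ) - 1) * (1/x)) := by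
        rw [h1]; exact mul_le_mul_of_nonneg_left (le_trans h2 h3) (le_of_lt hxd)
    _ ≤ x^d * (1 + (2:ℝ)^(⌈d⌉₊:ℕ) * (1/x)) := by
        apply mul_le_mul_of_nonneg_left _ (le_of_lt hxd)
        nlinarith
    _ = x^d + 2^(⌈d⌉₊:ℕ) * x^(d-1) := by rw [h4]; field_simp

private lemma rpow_add_one_le' {d : ℝ} (hd : 1 ≤ d) {x : ℝ} (hx : 1 ≤ x) :
    (x+1) ^ (d-1) ≤ 2 ^ (⌈d⌉₊ : ℕ) * x ^ (d-1) := by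
  have hx0 : (0:ℝ) < x := lt_of_lt_of_le one_pos hx
  have h1 : (x+1) ^ (d-1) ≤ (2*x) ^ (d-1) :=
    Real.rpow_le_rpow (by linarith) (by linarith) (by linarith)
  have h2 : (2*x) ^ (d-1) = 2^(d-1) * x^(d-1) :=
    Real.mul_rpow (by norm_num) (le_of_lt hx0)
  have h3 : (2:ℝ)^(d-1) ≤ 2 ^ ((⌈d⌉₊:ℕ):ℝ) :=
    Real.rpow_le_rpow_of_exponent_le (by norm_num) (by linarith [Nat.le_ceil d])
  have h4 : (2:ℝ) ^ ((⌈d⌉₊:ℕ):ℝ) = 2 ^ (⌈d⌉₊:ℕ) := Real.rpow_natCast 2 _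
  calc (x+1)^(d-1) ≤ 2^(d-1) * x^(d-1) := by rw [← h2]; exact h1
    _ ≤ 2^(⌈d⌉₊:ℕ) * x^(d-1) := by
        apply mul_le_mul_of_nonneg_right _ (le_of_lt (Real.rpow_pos_of_pos hx0 _))
        rw [← h4]; exact h3

private lemma boundary_finite {V : Type*} (G : SimpleGraph V) (hlf : G.LocallyFinite)
    {K : Set V} (hK : K.Finite) : (G.outerBoundary K).Finite := by
  have hsub : G.outerBoundary K ⊆ ⋃ u ∈ K, G.neighborSet u := by
    rintro v ⟨hv, u, hu, huv⟩
    exact Set.mem_biUnion hu huv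
  refine Set.Finite.subset (hK.biUnion fun u _ => ?_) hsub
  letI := hlf u
  exact (G.neighborSet u).toFinite

/-- Let `G` be a connected locally finite graph whose isoperimetric profile satisfies
`Φ(k) ≥ c * k^((d-1)/d)` for all `k ≥ 1`, for some `c > 0` and some real `d ≥ 2`.
Then `G` does not satisfy `{f(n)}`-containment for any `f = o(n^{d-2})`. -/
theorem firefighter_isoperimetric_polynomial {V : Type*} (G : SimpleGraph V)
    (hconn : G.Connected) (hlf : G.LocallyFinite)
    (c : ℝ) (hc : 0 < c) (d : ℝ) (hd : 2 ≤ d)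
    (hiso : ∀ k : ℕ, 1 ≤ k → c * (k : ℝ) ^ ((d - 1) / d) ≤ (G.isoProfile k : ℝ))
    (f : ℕ → ℕ)
    (hf : (fun n => (f n : ℝ)) =o[atTop] fun n => (n : ℝ) ^ (d - 2)) :
    ¬ HasContainment G f := by
  intro hcont
  have hd0 : (0:ℝ) < d := by linarith
  have hd1 : (1:ℝ) ≤ d := by linarith
  set p : ℝ := (d-1)/d with hp_def
  have hdp : d * p = d - 1 := by rw [hp_def]; field_simp
  have hp0 : 0 < p := div_pos (by linarith) hd0
  have hp1 : p ≤ 1 := by rw [hp_def, div_le_one hd0]; linarith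
  set D : ℝ := 2 ^ (⌈d⌉₊:ℕ) with hD_def
  have hD1 : (1:ℝ) ≤ D := one_le_pow₀ (by norm_num)
  have hD0 : (0:ℝ) < D := by linarith
  -- V is infinite
  have hVinf : (Set.univ : Set V).Infinite := by
    by_contra h
    rw [Set.not_infinite] at h
    haveI := hconn.nonempty
    have hne : (Set.univ : Set V).Nonempty := Set.univ_nonempty
    have hk : 0 < (Set.univ : Set V).ncard := (Set.ncard_pos h).mpr hne
    have hbd : G.outerBoundary (Set.univ : Set V) = ∅ :=
      Set.eq_empty_iff_forall_notMem.mpr (fun v hv => hv.1 trivial)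
    have hmem : 0 ∈ {m | ∃ K : Set V, K.Finite ∧ K.ncard = (Set.univ : Set V).ncard ∧
        (G.outerBoundary K).ncard = m} :=
      ⟨Set.univ, h, rfl, by rw [hbd]; exact Set.ncard_empty _⟩
    have h0 : G.isoProfile ((Set.univ : Set V).ncard) = 0 :=
      Nat.le_zero.mp (Nat.sInf_le hmem)
    have h1 := hiso _ hk
    rw [h0] at h1
    have hkR : (0:ℝ) < ((Set.univ : Set V).ncard : ℝ) := by exact_mod_cast hk
    have := mul_pos hc (Real.rpow_pos_of_pos hkR p)
    simp only [Nat.cast_zero] at h1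
    linarith
  -- choice of β
  obtain ⟨β, hβ0, hβ1, hβkey⟩ : ∃ β : ℝ, 0 < β ∧ β ≤ 1 ∧ 3 * D * β ≤ c * β ^ p := by
    rcases le_or_gt 1 (c / (3*D)) with h | h
    · refine ⟨1, one_pos, le_refl 1, ?_⟩
      rw [le_div_iff₀ (by linarith)] at h
      rw [Real.one_rpow]; linarith
    · set x : ℝ := c / (3*D) with hx_def
      have hx0 : (0:ℝ) < x := by positivity
      refine ⟨x ^ d, Real.rpow_pos_of_pos hx0 d, Real.rpow_le_one hx0.le h.le hd0.le, ?_⟩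
      have h1 : (x^d)^p = x^(d-1) := by rw [← Real.rpow_mul hx0.le, hdp]
      have h2 : x ^ d = x^(d-1) * x := by
        rw [← Real.rpow_add_one (ne_of_gt hx0)]; ring_nf
      have h3 : 3 * D * x = c := by rw [hx_def]; field_simp
      rw [h1, h2]
      have h5 : 3 * D * (x^(d-1) * x) = c * x^(d-1) := by rw [← h3]; ring
      linarith
  have hβp0 : (0:ℝ) < β ^ p := Real.rpow_pos_of_pos hβ0 p
  -- choice of ε and n₀
  set ε : ℝ := c * β ^ p / (3 * D) with hε_def
  have hε0 : 0 < ε := by positivity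
  obtain ⟨n₀, hn₀⟩ : ∃ n₀ : ℕ, ∀ n : ℕ, n₀ ≤ n → (f n : ℝ) ≤ ε * (n:ℝ) ^ (d-2) := by
    obtain ⟨n₀, hn₀⟩ := eventually_atTop.mp (hf.def hε0)
    refine ⟨n₀, fun n hn => ?_⟩
    have h := hn₀ n hn
    rwa [Real.norm_of_nonneg (by positivity), Real.norm_of_nonneg (by positivity)] at h
  -- cumulative firefighter budget
  set S : ℕ → ℕ := fun n => ∑ j ∈ Finset.range n, f (j+1) with hS_def
  set A : ℝ := (S n₀ : ℝ) with hA_def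
  have hA0 : 0 ≤ A := by positivity
  have hSsum : ∀ n : ℕ, n₀ ≤ n → 1 ≤ n → (S n : ℝ) ≤ A + ε * (n:ℝ) ^ (d-1) := by
    intro n hn hn1
    have hnR1 : (1:ℝ) ≤ (n:ℝ) := by exact_mod_cast hn1
    have hsplit : S n = S n₀ + ∑ j ∈ Finset.Ico n₀ n, f (j+1) := by
      rw [hS_def]
      simp only [Finset.range_eq_Ico]
      exact (Finset.sum_Ico_consecutive (fun j => f (j+1)) (Nat.zero_le n₀) hn).symm
    have hterm : ∀ j ∈ Finset.Ico n₀ n, ((f (j+1) : ℕ) : ℝ) ≤ ε * (n:ℝ) ^ (d-2) := by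
      intro j hj
      obtain ⟨hj1, hj2⟩ := Finset.mem_Ico.mp hj
      refine le_trans (hn₀ (j+1) (le_trans hj1 (Nat.le_succ j))) ?_
      apply mul_le_mul_of_nonneg_left _ hε0.le
      exact Real.rpow_le_rpow (by positivity) (by exact_mod_cast hj2) (by linarith)
    have hsum : ∑ j ∈ Finset.Ico n₀ n, ((f (j+1) : ℕ) : ℝ) ≤
        ((Finset.Ico n₀ n).card : ℝ) * (ε * (n:ℝ) ^ (d-2)) := by
      have := Finset.sum_le_card_nsmul (Finset.Ico n₀ n) (fun j => ((f (j+1):ℕ):ℝ))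
        (ε * (n:ℝ) ^ (d-2)) hterm
      rwa [nsmul_eq_mul] at this
    have hcard : ((Finset.Ico n₀ n).card : ℝ) ≤ (n : ℝ) := by
      rw [Nat.card_Ico]; exact_mod_cast Nat.sub_le n n₀
    have hpos : (0:ℝ) ≤ ε * (n:ℝ) ^ (d-2) := by positivity
    have hmul : ((Finset.Ico n₀ n).card : ℝ) * (ε * (n:ℝ)^(d-2)) ≤ (n:ℝ) * (ε * (n:ℝ)^(d-2)) :=
      mul_le_mul_of_nonneg_right hcard hpos
    have hrw : (n:ℝ) * (ε * (n:ℝ)^(d-2)) = ε * (n:ℝ)^(d-1) := by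
      have hd21 : d - 1 = (d-2) + 1 := by ring
      rw [hd21, Real.rpow_add_one (by positivity : (n:ℝ) ≠ 0)]; ring
    have hcast : (S n : ℝ) = A + ∑ j ∈ Finset.Ico n₀ n, ((f (j+1):ℕ):ℝ) := by
      rw [hsplit]; push_cast; ring
    rw [hcast]
    linarith
  -- choice of n₁ and k₀
  set n₁ : ℕ := max (max n₀ 1) ⌈3 * A / (c * β ^ p)⌉₊ with hn₁_def
  have hn₁0 : n₀ ≤ n₁ := le_trans (le_max_left _ _) (le_max_left _ _)
  have hn₁1 : 1 ≤ n₁ := le_trans (le_max_right _ _) (le_max_left _ _)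
  have hAb : ∀ n : ℕ, n₁ ≤ n → A ≤ c * β ^ p / 3 * (n:ℝ) ^ (d-1) := by
    intro n hn
    have hn1 : 1 ≤ n := le_trans hn₁1 hn
    have hnR1 : (1:ℝ) ≤ (n:ℝ) := by exact_mod_cast hn1
    have h1 : 3 * A / (c * β ^ p) ≤ (n:ℝ) := by
      calc 3 * A / (c * β ^ p) ≤ (⌈3 * A / (c * β ^ p)⌉₊ : ℝ) := Nat.le_ceil _
        _ ≤ (n₁ : ℝ) := by exact_mod_cast le_trans (le_max_right _ _) (le_refl n₁)
        _ ≤ (n : ℝ) := by exact_mod_cast hn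
    have h2 : (n:ℝ) ≤ (n:ℝ) ^ (d-1) := by
      nth_rewrite 1 [← Real.rpow_one (n:ℝ)]
      exact Real.rpow_le_rpow_of_exponent_le hnR1 (by linarith)
    have hcp : (0:ℝ) < c * β ^ p := by positivity
    rw [div_le_iff₀ hcp] at h1
    have h3 : c * β ^ p * (n:ℝ) ≤ c * β ^ p * (n:ℝ)^(d-1) :=
      mul_le_mul_of_nonneg_left h2 hcp.le
    linarith
  set k₀ : ℕ := ⌈β * (n₁:ℝ) ^ d⌉₊ + 1 with hk₀_def
  have hk₀R : β * (n₁:ℝ) ^ d ≤ (k₀ : ℝ) := by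
    rw [hk₀_def]; push_cast
    linarith [Nat.le_ceil (β * (n₁:ℝ) ^ d)]
  -- run the game
  obtain ⟨K₀, -, hK₀fin, hK₀card⟩ := hVinf.exists_subset_ncard_eq k₀
  obtain ⟨K, P, hK0, hst, N, hN⟩ := hcont K₀ hK₀fin
  have hBfin : ∀ n, (G.outerBoundary (K n)).Finite :=
    fun n => boundary_finite G hlf (hst.burning_finite n)
  have hKmono : ∀ n, K n ⊆ K (n+1) := by
    intro n; rw [hst.spread n]; exact Set.subset_union_left
  have hK0sub : ∀ n, K₀ ⊆ K n := by
    intro n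
    induction n with
    | zero => rw [hK0]
    | succ n ih => exact ih.trans (hKmono n)
  have hKlb : ∀ n, k₀ ≤ (K n).ncard := by
    intro n
    rw [← hK₀card]
    exact Set.ncard_le_ncard (hK0sub n) (hst.burning_finite n)
  have hk₀1 : 1 ≤ k₀ := by omega
  have hKn1 : ∀ n, 1 ≤ (K n).ncard := fun n => le_trans hk₀1 (hKlb n)
  -- protected set cardinality bound
  have hPcard : ∀ n, (P n).ncard ≤ S n := by
    intro n
    induction n with
    | zero => rw [hst.protected_zero]; simp
    | succ n ih =>
      have hsub : P (n+1) ⊆ P n ∪ (P (n+1) \ P n) := by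
        intro v hv
        by_cases h : v ∈ P n
        · exact Or.inl h
        · exact Or.inr ⟨hv, h⟩
      have h1 : (P (n+1)).ncard ≤ (P n).ncard + (P (n+1) \ P n).ncard :=
        le_trans (Set.ncard_le_ncard hsub ((hst.protected_finite n).union
          ((hst.protected_finite (n+1)).diff))) (Set.ncard_union_le _ _)
      have h2 : S (n+1) = S n + f (n+1) := Finset.sum_range_succ _ _
      have h3 := hst.protected_card n
      omega
  -- the key combinatorial step
  have hstep : ∀ n, (K n).ncard + (G.outerBoundary (K n)).ncard ≤
      (K (n+1)).ncard + (P (n+1)).ncard := by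
    intro n
    have hdisj : Disjoint (K n) (G.outerBoundary (K n) \ P (n+1)) := by
      rw [Set.disjoint_left]
      rintro v hv ⟨⟨hvn, -⟩, -⟩
      exact hvn hv
    have hcard : (K (n+1)).ncard = (K n).ncard + (G.outerBoundary (K n) \ P (n+1)).ncard := by
      rw [hst.spread n]
      exact Set.ncard_union_eq hdisj (hst.burning_finite n) ((hBfin n).diff)
    have hsub : G.outerBoundary (K n) ⊆ (G.outerBoundary (K n) \ P (n+1)) ∪ P (n+1) := by
      intro v hv
      by_cases h : v ∈ P (n+1)
      · exact Or.inr h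
      · exact Or.inl ⟨hv, h⟩
    have h1 : (G.outerBoundary (K n)).ncard ≤
        (G.outerBoundary (K n) \ P (n+1)).ncard + (P (n+1)).ncard :=
      le_trans (Set.ncard_le_ncard hsub (((hBfin n).diff).union
        (hst.protected_finite (n+1)))) (Set.ncard_union_le _ _)
    omega
  -- isoperimetry
  have hΦ : ∀ n, c * (((K n).ncard : ℕ) : ℝ) ^ p ≤ ((G.outerBoundary (K n)).ncard : ℝ) := by
    intro n
    have h1 := hiso ((K n).ncard) (hKn1 n)
    have h2 : G.isoProfile ((K n).ncard) ≤ (G.outerBoundary (K n)).ncard :=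
      Nat.sInf_le ⟨K n, hst.burning_finite n, rfl, rfl⟩
    calc c * (((K n).ncard : ℕ) : ℝ) ^ p ≤ (G.isoProfile ((K n).ncard) : ℝ) := h1
      _ ≤ ((G.outerBoundary (K n)).ncard : ℝ) := by exact_mod_cast h2
  -- real-valued recursive inequality
  have hreal : ∀ n, ((K n).ncard : ℝ) + c * (((K n).ncard : ℕ) : ℝ) ^ p ≤
      ((K (n+1)).ncard : ℝ) + (S (n+1) : ℝ) := by
    intro n
    have h1 : ((K n).ncard : ℝ) + ((G.outerBoundary (K n)).ncard : ℝ) ≤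
        ((K (n+1)).ncard : ℝ) + ((P (n+1)).ncard : ℝ) := by exact_mod_cast hstep n
    have h2 : ((P (n+1)).ncard : ℝ) ≤ (S (n+1) : ℝ) := by exact_mod_cast hPcard (n+1)
    linarith [hΦ n]
  -- main growth estimate
  have hmain : ∀ n : ℕ, β * (n:ℝ) ^ d ≤ ((K n).ncard : ℝ) := by
    intro n
    induction n with
    | zero =>
      simp only [Nat.cast_zero]
      rw [Real.zero_rpow (ne_of_gt hd0), mul_zero]
      positivity
    | succ n ih =>
      rcases le_or_gt (n+1) n₁ with hle | hlt
      · -- small times: use the size of the initial fire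
        have h1 : ((n:ℝ)+1) ^ d ≤ (n₁:ℝ) ^ d := by
          apply Real.rpow_le_rpow (by positivity) _ hd0.le
          exact_mod_cast hle
        have h2 : (k₀ : ℝ) ≤ ((K (n+1)).ncard : ℝ) := by exact_mod_cast hKlb (n+1)
        have h3 : β * ((n:ℝ)+1) ^ d ≤ β * (n₁:ℝ) ^ d :=
          mul_le_mul_of_nonneg_left h1 hβ0.le
        push_cast
        linarith
      · -- large times: the growth step
        have hn₁n : n₁ ≤ n := by omega
        have hn1 : 1 ≤ n := le_trans hn₁1 hn₁n
        have hnR1 : (1:ℝ) ≤ (n:ℝ) := by exact_mod_cast hn1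
        have hnR0 : (0:ℝ) ≤ (n:ℝ) := by linarith
        set T : ℝ := (n:ℝ) ^ (d-1) with hT_def
        have hT0 : (0:ℝ) ≤ T := Real.rpow_nonneg hnR0 _
        -- lower bound for the boundary term
        have hbn : β * (n:ℝ)^d ≤ ((K n).ncard : ℝ) := ih
        have hlb : c * β ^ p * T ≤ c * (((K n).ncard : ℕ) : ℝ) ^ p := by
          have h1 : (β * (n:ℝ)^d) ^ p ≤ (((K n).ncard : ℕ) : ℝ) ^ p :=
            Real.rpow_le_rpow (by positivity) hbn hp0.le
          have h2 : (β * (n:ℝ)^d) ^ p = β ^ p * ((n:ℝ)^d) ^ p :=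
            Real.mul_rpow hβ0.le (by positivity)
          have h3 : ((n:ℝ)^d) ^ p = T := by
            rw [hT_def, ← Real.rpow_mul hnR0, hdp]
          rw [h2, h3] at h1
          have h4 := mul_le_mul_of_nonneg_left h1 hc.le
          linarith
        -- upper bound for the firefighter budget
        have hbud : (S (n+1) : ℝ) ≤ A + c * β ^ p / 3 * T := by
          have h1 : (S (n+1) : ℝ) ≤ A + ε * ((n+1 : ℕ):ℝ) ^ (d-1) :=
            hSsum (n+1) (by omega) (by omega)
          have h2 : ((n+1 : ℕ):ℝ) ^ (d-1) ≤ D * T := by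
            push_cast
            exact rpow_add_one_le' hd1 hnR1
          have h3 : ε * (D * T) = c * β ^ p / 3 * T := by
            rw [hε_def]; field_simp
          have h4 : ε * ((n+1 : ℕ):ℝ) ^ (d-1) ≤ ε * (D * T) :=
            mul_le_mul_of_nonneg_left h2 hε0.le
          linarith
        -- upper bound for the growth of the target
        have htgt : β * ((n:ℝ)+1) ^ d ≤ β * (n:ℝ)^d + β * D * T := by
          have h5 := mul_le_mul_of_nonneg_left (rpow_add_one_le hd1 hnR1) hβ0.le
          rw [hD_def, hT_def]
          linarith
        have hβD : β * D * T ≤ c * β ^ p / 3 * T := by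
          apply mul_le_mul_of_nonneg_right _ hT0
          linarith
        have hA' : A ≤ c * β ^ p / 3 * T := hAb n hn₁n
        have hrec := hreal n
        push_cast
        linarith
  -- contradiction with eventual constancy
  set M : ℕ := (K N).ncard with hM_def
  set n : ℕ := max (max N n₁) (max 1 ⌈((M:ℝ)+1)/β⌉₊) with hn_def
  have hnN : N ≤ n := le_trans (le_max_left _ _) (le_max_left _ _)
  have hn1 : 1 ≤ n := le_trans (le_max_left _ _) (le_max_right _ _)
  have hnc : ⌈((M:ℝ)+1)/β⌉₊ ≤ n := le_trans (le_max_right _ _) (le_max_right _ _)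
  have hKnM : (K n).ncard = M := by rw [hN n hnN]
  have h1 := hmain n
  rw [hKnM] at h1
  have hnR1 : (1:ℝ) ≤ (n:ℝ) := by exact_mod_cast hn1
  have h2 : (n:ℝ) ≤ (n:ℝ) ^ d := by
    nth_rewrite 1 [← Real.rpow_one (n:ℝ)]
    exact Real.rpow_le_rpow_of_exponent_le hnR1 hd1
  have h3 : ((M:ℝ)+1)/β ≤ (n:ℝ) := by
    calc ((M:ℝ)+1)/β ≤ (⌈((M:ℝ)+1)/β⌉₊ : ℝ) := Nat.le_ceil _
      _ ≤ (n:ℝ) := by exact_mod_cast hnc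
  rw [div_le_iff₀ hβ0] at h3
  have h4 : β * (n:ℝ) ≤ β * (n:ℝ) ^ d := mul_le_mul_of_nonneg_left h2 hβ0.le
  nlinarith
end

section
/- Let G be a connected locally finite graph whose isoperimetric profile satisfies Φ(k) ≥ c·k^{(d-1)/d} for all k ≥ 1, for some constant c > 0 and some real d ≥ 2, and let f : ℕ → ℕ satisfy f(n) = o(n^{d-2}). Then there exists an integer N (depending only on c, d and f) such that no initial fire of size at least N can be contained by deploying at most f(n) firefighters at time n: for every such strategy the set of burning vertices grows without bound, indeed the number of burning vertices at time n is at least ((n+F)/R)^d for suitable constants F, R > 0. -/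
open Filter Real

private lemma ff_mvt {d : ℝ} (hd : 1 ≤ d) {a b : ℝ} (ha : 0 < a) (hab : a ≤ b) :
    b ^ d - a ^ d ≤ d * b ^ (d - 1) * (b - a) := by
  rcases eq_or_lt_of_le hab with rfl | hab'
  · simp
  · obtain ⟨ξ, hξ, hderiv⟩ := exists_hasDerivAt_eq_slope (fun x => x ^ d)
      (fun x => d * x ^ (d - 1)) hab'
      (fun x hx => (Real.hasDerivAt_rpow_const (p := d)
        (Or.inl (ne_of_gt (lt_of_lt_of_le ha hx.1)))).continuousAt.continuousWithinAt)
      (fun x hx => Real.hasDerivAt_rpow_const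
        (Or.inl (ne_of_gt (lt_of_lt_of_le ha (le_of_lt hx.1)))))
    have hξb : ξ ^ (d - 1) ≤ b ^ (d - 1) :=
      Real.rpow_le_rpow (le_of_lt (lt_of_lt_of_le ha (le_of_lt hξ.1))) (le_of_lt hξ.2)
        (by linarith)
    have hba : 0 < b - a := sub_pos.mpr hab'
    have h1 : b ^ d - a ^ d = d * ξ ^ (d - 1) * (b - a) := by
      field_simp at hderiv
      linarith [hderiv]
    rw [h1]
    have : d * ξ ^ (d - 1) ≤ d * b ^ (d - 1) := by nlinarith
    nlinarith

private lemma ff_split {d : ℝ} (hd : 2 ≤ d) {x : ℝ} (hx : 0 ≤ x) :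
    x ^ (d - 1) = x * x ^ (d - 2) := by
  rcases eq_or_lt_of_le hx with rfl | hx'
  · rw [Real.zero_rpow (ne_of_gt (show (0:ℝ) < d - 1 by linarith)), zero_mul]
  · rw [show d - 1 = 1 + (d - 2) by ring, Real.rpow_add hx', Real.rpow_one]

set_option maxHeartbeats 1000000 in
/-- Quantitative version: under a `d`-dimensional isoperimetric inequality and
`f = o(n^{d-2})`, there are `N, F, R` (depending only on `c`, `d` and `f`) such that no
initial fire of size at least `N` can be contained deploying at most `f n` firefighters
at time `n`: for every such strategy the number of burning vertices at time `n` is at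
least `((n+F)/R)^d`, hence grows without bound. -/
theorem firefighter_isoperimetric_polynomial_quantitative {V : Type*} (G : SimpleGraph V)
    (hconn : G.Connected) (hlf : G.LocallyFinite)
    (c : ℝ) (hc : 0 < c) (d : ℝ) (hd : 2 ≤ d)
    (hiso : ∀ k : ℕ, 1 ≤ k → c * (k : ℝ) ^ ((d - 1) / d) ≤ (G.isoProfile k : ℝ))
    (f : ℕ → ℕ)
    (hf : (fun n => (f n : ℝ)) =o[atTop] fun n => (n : ℝ) ^ (d - 2)) :
    ∃ (N : ℕ) (F R : ℝ), 0 < F ∧ 0 < R ∧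
      ∀ K P : ℕ → Set V, FireStrategy G f K P → N ≤ (K 0).ncard →
        (∀ n : ℕ, (((n : ℝ) + F) / R) ^ d ≤ ((K n).ncard : ℝ)) ∧
          Tendsto (fun n => (K n).ncard) atTop atTop ∧
            ¬ ∃ M : ℕ, ∀ n : ℕ, M ≤ n → K n = K M := by
  have hd0 : (0:ℝ) < d := by linarith
  have hd1 : (0:ℝ) < d - 1 := by linarith
  set R : ℝ := max 1 (4 * d * 2 ^ (d - 1) / c) with hR_def
  have hR1 : (1:ℝ) ≤ R := le_max_left _ _
  have hR0 : (0:ℝ) < R := lt_of_lt_of_le one_pos hR1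
  have hRbig : 4 * d * 2 ^ (d - 1) / c ≤ R := le_max_right _ _
  have hRpow0 : (0:ℝ) < R ^ (d - 1) := Real.rpow_pos_of_pos hR0 _
  set ε : ℝ := c / (4 * R ^ (d - 1)) with hε_def
  have hε0 : 0 < ε := div_pos hc (by positivity)
  obtain ⟨n₀, hn₀⟩ : ∃ n₀ : ℕ, ∀ n ≥ n₀, (f n : ℝ) ≤ ε * (n : ℝ) ^ (d - 2) := by
    obtain ⟨n₀, hn₀⟩ := eventually_atTop.mp (hf.bound hε0)
    refine ⟨n₀, fun n hn => ?_⟩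
    have := hn₀ n hn
    rwa [Real.norm_natCast,
      Real.norm_of_nonneg (Real.rpow_nonneg (Nat.cast_nonneg n) _)] at this
  set A : ℝ := ∑ i ∈ Finset.range (n₀ + 1), (f i : ℝ) with hA_def
  have hA0 : 0 ≤ A := Finset.sum_nonneg fun i _ => Nat.cast_nonneg _
  set Q : ℝ := max 1 (2 * A / c) with hQ_def
  have hQ1 : 1 ≤ Q := le_max_left _ _
  have hQA : 2 * A / c ≤ Q := le_max_right _ _
  set F : ℝ := R * Q with hF_def
  have hQ0 : (0:ℝ) < Q := lt_of_lt_of_le one_pos hQ1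
  have hF0 : 0 < F := mul_pos hR0 hQ0
  have hF1 : 1 ≤ F := by nlinarith
  have hFR : F / R = Q := mul_div_cancel_left₀ Q hR0.ne'
  refine ⟨⌈Q ^ d⌉₊, F, R, hF0, hR0, ?_⟩
  intro K P hS hN
  -- sum bound for the firefighters
  have hsum : ∀ n : ℕ, ∑ i ∈ Finset.range n, (f (i + 1) : ℝ) ≤ A + ε * (n : ℝ) ^ (d - 1) := by
    intro n
    induction n with
    | zero =>
      simp only [Finset.range_zero, Finset.sum_empty, Nat.cast_zero]
      rw [Real.zero_rpow (ne_of_gt hd1)]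
      linarith
    | succ n ih =>
      by_cases hcase : n₀ ≤ n + 1
      · rw [Finset.sum_range_succ]
        have hfb := hn₀ (n + 1) hcase
        push_cast at hfb ⊢
        have key : ((n:ℝ)) ^ (d-1) + ((n:ℝ)+1) ^ (d-2) ≤ ((n:ℝ)+1) ^ (d-1) := by
          have h1 : ((n:ℝ)+1) ^ (d-1) = ((n:ℝ)+1) * ((n:ℝ)+1) ^ (d-2) :=
            ff_split hd (by positivity)
          have h2 : ((n:ℝ)) ^ (d-1) = (n:ℝ) * (n:ℝ) ^ (d-2) :=
            ff_split hd (Nat.cast_nonneg n)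
          have h3 : ((n:ℝ)) ^ (d-2) ≤ ((n:ℝ)+1) ^ (d-2) :=
            Real.rpow_le_rpow (Nat.cast_nonneg n) (by linarith) (by linarith)
          have h4 : (0:ℝ) ≤ (n:ℝ) := Nat.cast_nonneg n
          nlinarith [Real.rpow_nonneg (show (0:ℝ) ≤ (n:ℝ)+1 by positivity) (d-2)]
        nlinarith [mul_le_mul_of_nonneg_left key hε0.le]
      · push_neg at hcase
        have hsub : ∑ i ∈ Finset.range (n + 1), (f (i + 1) : ℝ) ≤ A := by
          have hre : ∑ i ∈ Finset.range (n + 1), (f (i + 1) : ℝ)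
              = ∑ j ∈ Finset.Ico 1 (n + 2), (f j : ℝ) := by
            rw [Finset.sum_Ico_eq_sum_range]
            simp [add_comm]
          rw [hre, hA_def]
          apply Finset.sum_le_sum_of_subset_of_nonneg
          · intro j hj
            simp only [Finset.mem_Ico, Finset.mem_range] at hj ⊢
            omega
          · intros
            positivity
        have : (0:ℝ) ≤ ε * ((n+1 : ℕ) : ℝ) ^ (d - 1) := by positivity
        linarith
  -- bound on protected vertices
  have hPn : ∀ n, (P n).ncard ≤ ∑ i ∈ Finset.range n, f (i + 1) := by
    intro n
    induction n with
    | zero => simp [hS.protected_zero]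
    | succ n ih =>
      have heq : P (n + 1) = P n ∪ (P (n + 1) \ P n) :=
        (Set.union_diff_cancel (hS.protected_mono n)).symm
      rw [Finset.sum_range_succ]
      calc (P (n + 1)).ncard ≤ (P n).ncard + (P (n + 1) \ P n).ncard := by
            conv_lhs => rw [heq]
            exact Set.ncard_union_le _ _
        _ ≤ _ := add_le_add ih (hS.protected_card n)
  have hPsum : ∀ n : ℕ, ((P n).ncard : ℝ) ≤ A + ε * (n : ℝ) ^ (d - 1) := by
    intro n
    refine le_trans ?_ (hsum n)
    exact_mod_cast hPn n
  -- the key counting step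
  have hstep : ∀ n, (K n).ncard + (G.outerBoundary (K n)).ncard
      ≤ (K (n + 1)).ncard + (P (n + 1)).ncard := by
    intro n
    set B := G.outerBoundary (K n) with hB_def
    have hdisj : Disjoint (K n) (B \ P (n + 1)) := by
      rw [Set.disjoint_left]
      rintro v hv ⟨hvB, -⟩
      exact hvB.1 hv
    have hKn1 : (K (n + 1)).Finite := hS.burning_finite (n + 1)
    have hBPfin : (B \ P (n + 1)).Finite :=
      hKn1.subset (by rw [hS.spread n]; exact Set.subset_union_right)
    have hcard : (K (n + 1)).ncard = (K n).ncard + (B \ P (n + 1)).ncard := by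
      rw [hS.spread n]
      exact Set.ncard_union_eq hdisj (hS.burning_finite n) hBPfin
    have hB : B.ncard ≤ (B \ P (n + 1)).ncard + (P (n + 1)).ncard := by
      have hsub : B ⊆ (B \ P (n + 1)) ∪ P (n + 1) := fun v hv => by
        by_cases h : v ∈ P (n + 1)
        · exact Or.inr h
        · exact Or.inl ⟨hv, h⟩
      calc B.ncard ≤ ((B \ P (n + 1)) ∪ P (n + 1)).ncard :=
            Set.ncard_le_ncard hsub (hBPfin.union (hS.protected_finite (n + 1)))
        _ ≤ _ := Set.ncard_union_le _ _
    omega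
  have hΦ : ∀ n, 1 ≤ (K n).ncard →
      c * ((K n).ncard : ℝ) ^ ((d - 1) / d) ≤ ((G.outerBoundary (K n)).ncard : ℝ) := by
    intro n h1
    refine le_trans (hiso _ h1) ?_
    have hmem : (G.outerBoundary (K n)).ncard ∈
        {m | ∃ Ks : Set V, Ks.Finite ∧ Ks.ncard = (K n).ncard ∧
          (G.outerBoundary Ks).ncard = m} := ⟨K n, hS.burning_finite n, rfl, rfl⟩
    have h2 : G.isoProfile (K n).ncard ≤ (G.outerBoundary (K n)).ncard := Nat.sInf_le hmem
    exact_mod_cast h2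
  -- main induction
  have main : ∀ n : ℕ, (((n : ℝ) + F) / R) ^ d ≤ ((K n).ncard : ℝ) := by
    intro n
    induction n with
    | zero =>
      have h0 : (((0:ℕ) : ℝ) + F) / R = Q := by
        rw [Nat.cast_zero, zero_add, hFR]
      rw [h0]
      exact le_trans (Nat.le_ceil _) (Nat.cast_le.mpr hN)
    | succ n ih =>
      push_cast
      set a : ℝ := ((n:ℝ) + F) / R with ha_def
      set b : ℝ := ((n:ℝ) + 1 + F) / R with hb_def
      have ha1 : 1 ≤ a := by
        rw [ha_def, le_div_iff₀ hR0, one_mul]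
        have := Nat.cast_nonneg (α := ℝ) n
        nlinarith
      have ha0 : 0 < a := lt_of_lt_of_le one_pos ha1
      have hk1R : (1:ℝ) ≤ ((K n).ncard : ℝ) := by
        refine le_trans ?_ ih
        calc (1:ℝ) = 1 ^ d := (Real.one_rpow d).symm
          _ ≤ a ^ d := Real.rpow_le_rpow zero_le_one ha1 hd0.le
      have hk1 : 1 ≤ (K n).ncard := by exact_mod_cast hk1R
      have hΦn := hΦ n hk1
      have had : a ^ (d - 1) ≤ ((K n).ncard : ℝ) ^ ((d - 1) / d) := by
        have h1 : (a ^ d) ^ ((d - 1) / d) ≤ ((K n).ncard : ℝ) ^ ((d - 1) / d) :=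
          Real.rpow_le_rpow (Real.rpow_nonneg ha0.le _) ih (by positivity)
        have h2 : (a ^ d) ^ ((d - 1) / d) = a ^ (d - 1) := by
          rw [← Real.rpow_mul ha0.le]
          congr 1
          field_simp
        rwa [h2] at h1
      have hcast : ((K n).ncard : ℝ) + ((G.outerBoundary (K n)).ncard : ℝ)
          ≤ ((K (n + 1)).ncard : ℝ) + ((P (n + 1)).ncard : ℝ) := by
        exact_mod_cast hstep n
      have hPb := hPsum (n + 1)
      push_cast at hPb
      have hab : a ≤ b := by
        rw [ha_def, hb_def]
        gcongr
        linarith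
      have hba : b - a = 1 / R := by
        rw [ha_def, hb_def, div_sub_div_same]
        congr 1
        ring
      have hmvt := ff_mvt (by linarith : (1:ℝ) ≤ d) ha0 hab
      have hb2a : b ≤ 2 * a := by
        rw [hb_def, ha_def, ← mul_div_assoc]
        gcongr
        have h0n : (0:ℝ) ≤ (n:ℝ) := Nat.cast_nonneg n
        linarith
      have hbpow : b ^ (d - 1) ≤ 2 ^ (d - 1) * a ^ (d - 1) := by
        calc b ^ (d - 1) ≤ (2 * a) ^ (d - 1) :=
              Real.rpow_le_rpow (by linarith) hb2a (by linarith)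
          _ = 2 ^ (d - 1) * a ^ (d - 1) := Real.mul_rpow (by norm_num) ha0.le
      have hq0 : 0 ≤ a ^ (d - 1) := Real.rpow_nonneg ha0.le _
      have h2p : (0:ℝ) < 2 ^ (d - 1) := Real.rpow_pos_of_pos two_pos _
      have h5 : d * 2 ^ (d - 1) / R ≤ c / 4 := by
        rw [div_le_div_iff₀ hR0 (by norm_num)]
        rw [div_le_iff₀ hc] at hRbig
        nlinarith
      have h6 : ε * ((n:ℝ) + 1) ^ (d - 1) ≤ (c / 4) * a ^ (d - 1) := by
        have hn1F : ((n:ℝ) + 1) ≤ (n:ℝ) + F := by linarith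
        have e1 : ((n:ℝ) + 1) ^ (d - 1) ≤ ((n:ℝ) + F) ^ (d - 1) :=
          Real.rpow_le_rpow (by positivity) hn1F (by linarith)
        have e2 : ((n:ℝ) + F) = R * a := by
          rw [ha_def]
          field_simp
        have e3 : ((n:ℝ) + F) ^ (d - 1) = R ^ (d - 1) * a ^ (d - 1) := by
          rw [e2, Real.mul_rpow hR0.le ha0.le]
        have e4 : ε * R ^ (d - 1) = c / 4 := by
          rw [hε_def]
          field_simp
        calc ε * ((n:ℝ) + 1) ^ (d - 1) ≤ ε * (R ^ (d - 1) * a ^ (d - 1)) := by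
              rw [← e3]; exact mul_le_mul_of_nonneg_left e1 hε0.le
          _ = (c / 4) * a ^ (d - 1) := by rw [← mul_assoc, e4]
      have h7 : A ≤ (c / 2) * a ^ (d - 1) := by
        have e1 : Q ≤ a := by
          rw [ha_def, ← hFR]
          gcongr
          have h0n : (0:ℝ) ≤ (n:ℝ) := Nat.cast_nonneg n
          linarith
        have e2 : a ≤ a ^ (d - 1) := by
          calc a = a ^ (1:ℝ) := (Real.rpow_one a).symm
            _ ≤ a ^ (d - 1) := Real.rpow_le_rpow_of_exponent_le ha1 (by linarith)
        rw [div_le_iff₀ hc] at hQA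
        nlinarith
      have hbp : d * b ^ (d - 1) * (b - a) ≤ d * 2 ^ (d - 1) / R * a ^ (d - 1) := by
        rw [hba]
        have h1 : d * b ^ (d - 1) ≤ d * (2 ^ (d - 1) * a ^ (d - 1)) :=
          mul_le_mul_of_nonneg_left hbpow (by linarith)
        have h2 := mul_le_mul_of_nonneg_right h1 (le_of_lt (by positivity : (0:ℝ) < 1 / R))
        calc d * b ^ (d - 1) * (1 / R) ≤ d * (2 ^ (d - 1) * a ^ (d - 1)) * (1 / R) := h2
          _ = d * 2 ^ (d - 1) / R * a ^ (d - 1) := by ring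
      have hprod5 : d * 2 ^ (d - 1) / R * a ^ (d - 1) ≤ (c / 4) * a ^ (d - 1) :=
        mul_le_mul_of_nonneg_right h5 hq0
      have hca : c * a ^ (d - 1) ≤ c * ((K n).ncard : ℝ) ^ ((d - 1) / d) :=
        mul_le_mul_of_nonneg_left had hc.le
      linarith
  have hT : Tendsto (fun n : ℕ => (((n : ℝ) + F) / R) ^ d) atTop atTop := by
    apply (tendsto_rpow_atTop hd0).comp
    exact (tendsto_atTop_add_const_right atTop F tendsto_natCast_atTop_atTop).atTop_div_const hR0
  have hT2 : Tendsto (fun n : ℕ => ((K n).ncard : ℝ)) atTop atTop :=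
    tendsto_atTop_mono main hT
  have hT3 : Tendsto (fun n => (K n).ncard) atTop atTop := tendsto_natCast_atTop_iff.mp hT2
  refine ⟨main, hT3, ?_⟩
  rintro ⟨M, hM⟩
  obtain ⟨m, hm1, hm2⟩ :=
    ((hT3.eventually_ge_atTop ((K M).ncard + 1)).and (eventually_ge_atTop M)).exists
  rw [hM m hm2] at hm1
  omega
end

section
/- Let G be the Cayley graph of a finitely generated group with respect to a finite symmetric generating set, and suppose its growth function is superpolynomial, i.e., v(n) ⪰ n^d for every integer d ≥ 2 (in particular this holds for any group of intermediate growth). Then G does not satisfy polynomial containment of any degree: for every k ∈ ℕ and every function f : ℕ → ℕ with f(n) = O(n^k), G does not satisfy the {f(n)}-containment property. -/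
open Filter Real

namespace FFaux

variable {Γ : Type*} [Group Γ] (S : Finset Γ)

def gball (n : ℕ) : Set Γ :=
  {g : Γ | ∃ l : List Γ, l.length ≤ n ∧ (∀ x ∈ l, x ∈ (S : Set Γ)) ∧ l.prod = g}

lemma growth_eq (n : ℕ) : growth S n = (gball S n).ncard := rfl

lemma gball_finite (n : ℕ) : (gball S n).Finite := by
  have h : gball S n ⊆ (fun l : List S => (l.map Subtype.val).prod) '' {l | l.length ≤ n} := by
    rintro g ⟨l, hlen, hmem, hprod⟩
    refine ⟨l.attach.map (fun x => ⟨x.1, hmem x.1 x.2⟩), by simpa using hlen, ?_⟩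
    simp only [List.map_map]
    have : (l.attach.map ((Subtype.val) ∘ (fun x : {x // x ∈ l} => (⟨x.1, hmem x.1 x.2⟩ : S)))) = l := by
      simp [Function.comp]
    rw [this, hprod]
  exact Set.Finite.subset (Set.Finite.image _ (List.finite_length_le S n)) h

lemma one_mem_gball (n : ℕ) : (1 : Γ) ∈ gball S n := ⟨[], by simp, by simp, by simp⟩

lemma growth_pos (n : ℕ) : 0 < growth S n := by
  rw [growth_eq]
  exact Set.ncard_pos (gball_finite S n) |>.mpr ⟨1, one_mem_gball S n⟩

lemma cayley_adj {u v : Γ} : (cayleyGraph S).Adj u v ↔ u ≠ v ∧ (u⁻¹ * v ∈ S ∨ v⁻¹ * u ∈ S) :=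
  SimpleGraph.fromRel_adj _ u v

lemma boundary_finite {K : Set Γ} (hK : K.Finite) :
    ((cayleyGraph S).outerBoundary K).Finite := by
  have h : (cayleyGraph S).outerBoundary K ⊆
      ⋃ u ∈ K, ((fun s => u * s) '' (S : Set Γ)) ∪ ((fun s => u * s⁻¹) '' (S : Set Γ)) := by
    rintro v ⟨hv, u, hu, hadj⟩
    rcases (cayley_adj S).mp hadj with ⟨-, h1 | h2⟩
    · exact Set.mem_biUnion hu (Or.inl ⟨u⁻¹ * v, h1, by group⟩)
    · exact Set.mem_biUnion hu (Or.inr ⟨v⁻¹ * u, h2, by group⟩)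
  exact Set.Finite.subset (hK.biUnion fun u _ => ((S.finite_toSet.image _).union (S.finite_toSet.image _))) h

variable {Γ : Type*} [Group Γ] (S : Finset Γ)

/-- symmetric difference of `K` and `K g⁻¹`, i.e. points where `1_K(x) ≠ 1_K(xg)`. -/
def sdiffSet (K : Set Γ) (g : Γ) : Set Γ :=
  {x | (x ∈ K ∧ x * g ∉ K) ∨ (x ∉ K ∧ x * g ∈ K)}

lemma sdiffSet_finite {K : Set Γ} (hK : K.Finite) (g : Γ) : (sdiffSet K g).Finite := by
  have h : sdiffSet K g ⊆ K ∪ (fun y => y * g⁻¹) '' K := by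
    rintro x (⟨h1, -⟩ | ⟨-, h2⟩)
    · exact Or.inl h1
    · exact Or.inr ⟨x * g, h2, by group⟩
  exact Set.Finite.subset (hK.union (hK.image _)) h

lemma sdiffSet_step {K : Set Γ} (hK : K.Finite) {s : Γ} (hs : s ∈ S) :
    (sdiffSet K s).ncard ≤ 2 * ((cayleyGraph S).outerBoundary K).ncard := by
  have hbd := boundary_finite S hK
  have hsplit : sdiffSet K s ⊆ {x | x ∈ K ∧ x * s ∉ K} ∪ {x | x ∉ K ∧ x * s ∈ K} := by
    rintro x (h | h); exacts [Or.inl h, Or.inr h]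
  have h1 : ({x | x ∈ K ∧ x * s ∉ K} : Set Γ).ncard ≤ ((cayleyGraph S).outerBoundary K).ncard := by
    have himg : (fun x => x * s) '' {x | x ∈ K ∧ x * s ∉ K} ⊆ (cayleyGraph S).outerBoundary K := by
      rintro y ⟨x, ⟨hxK, hxsK⟩, rfl⟩
      refine ⟨hxsK, x, hxK, (cayley_adj S).mpr ⟨?_, Or.inl (by simpa using hs)⟩⟩
      intro hcontra
      exact hxsK (show x * s ∈ K by simp only [← hcontra]; exact hxK)
    calc ({x | x ∈ K ∧ x * s ∉ K} : Set Γ).ncard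
        = ((fun x => x * s) '' {x | x ∈ K ∧ x * s ∉ K}).ncard :=
          (Set.ncard_image_of_injective _ (mul_left_injective s)).symm
      _ ≤ _ := Set.ncard_le_ncard himg hbd
  have h2 : ({x | x ∉ K ∧ x * s ∈ K} : Set Γ).ncard ≤ ((cayleyGraph S).outerBoundary K).ncard := by
    refine Set.ncard_le_ncard ?_ hbd
    rintro x ⟨hxK, hxsK⟩
    refine ⟨hxK, x * s, hxsK, (cayley_adj S).mpr ⟨?_, Or.inr (by simpa using hs)⟩⟩
    intro hcontra
    exact hxK (hcontra ▸ hxsK)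
  calc (sdiffSet K s).ncard ≤ ({x | x ∈ K ∧ x * s ∉ K} ∪ {x | x ∉ K ∧ x * s ∈ K} : Set Γ).ncard :=
        Set.ncard_le_ncard hsplit (by
          refine Set.Finite.union (hK.subset ?_) ((boundary_finite S hK).subset ?_)
          · rintro x ⟨h, -⟩; exact h
          · rintro x ⟨hxK, hxsK⟩
            refine ⟨hxK, x * s, hxsK, (cayley_adj S).mpr ⟨?_, Or.inr (by simpa using hs)⟩⟩
            intro hcontra; exact hxK (hcontra ▸ hxsK))
    _ ≤ _ := by
        have := Set.ncard_union_le ({x | x ∈ K ∧ x * s ∉ K} : Set Γ) {x | x ∉ K ∧ x * s ∈ K}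
        omega

lemma sdiffSet_word {K : Set Γ} (hK : K.Finite) :
    ∀ l : List Γ, (∀ x ∈ l, x ∈ (S : Set Γ)) →
      (sdiffSet K l.prod).ncard ≤ 2 * l.length * ((cayleyGraph S).outerBoundary K).ncard := by
  intro l
  induction l with
  | nil => intro _; simp [sdiffSet]
  | cons s t ih =>
    intro hmem
    have hs : s ∈ S := hmem s (by simp)
    have ht : ∀ x ∈ t, x ∈ (S : Set Γ) := fun x hx => hmem x (by simp [hx])
    have hsub : sdiffSet K (s :: t).prod ⊆ sdiffSet K s ∪ (fun y => y * s⁻¹) '' sdiffSet K t.prod := by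
      intro x hx
      simp only [List.prod_cons] at hx
      by_cases hxs : x * s ∈ K
      · rcases hx with ⟨hxK, hxp⟩ | ⟨hxK, hxp⟩
        · refine Or.inr ⟨x * s, Or.inl ⟨hxs, by rwa [← mul_assoc] at hxp⟩, by group⟩
        · exact Or.inl (Or.inr ⟨hxK, hxs⟩)
      · rcases hx with ⟨hxK, hxp⟩ | ⟨hxK, hxp⟩
        · exact Or.inl (Or.inl ⟨hxK, hxs⟩)
        · refine Or.inr ⟨x * s, Or.inr ⟨hxs, by rwa [← mul_assoc] at hxp⟩, by group⟩
    have himg : ((fun y => y * s⁻¹) '' sdiffSet K t.prod).ncard = (sdiffSet K t.prod).ncard :=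
      Set.ncard_image_of_injective _ (mul_left_injective s⁻¹)
    have h1 : (sdiffSet K (s :: t).prod).ncard
        ≤ (sdiffSet K s).ncard + (sdiffSet K t.prod).ncard := by
      calc (sdiffSet K (s :: t).prod).ncard
          ≤ (sdiffSet K s ∪ (fun y => y * s⁻¹) '' sdiffSet K t.prod).ncard :=
            Set.ncard_le_ncard hsub ((sdiffSet_finite hK s).union ((sdiffSet_finite hK t.prod).image _))
        _ ≤ (sdiffSet K s).ncard + ((fun y => y * s⁻¹) '' sdiffSet K t.prod).ncard :=
            Set.ncard_union_le _ _
        _ = _ := by rw [himg]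
    have h2 := sdiffSet_step S hK hs
    have h3 := ih ht
    simp only [List.length_cons]
    calc (sdiffSet K (s :: t).prod).ncard ≤ (sdiffSet K s).ncard + (sdiffSet K t.prod).ncard := h1
      _ ≤ 2 * ((cayleyGraph S).outerBoundary K).ncard
          + 2 * t.length * ((cayleyGraph S).outerBoundary K).ncard := Nat.add_le_add h2 h3
      _ = 2 * (t.length + 1) * ((cayleyGraph S).outerBoundary K).ncard := by ring

open Classical in
lemma csc {K : Set Γ} (hK : K.Finite) (n : ℕ) (hv : 2 * K.ncard ≤ growth S n) :
    K.ncard ≤ 4 * n * ((cayleyGraph S).outerBoundary K).ncard := by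
  classical
  set b := ((cayleyGraph S).outerBoundary K).ncard with hb
  set KF := hK.toFinset with hKF
  set BF := (gball_finite S n).toFinset with hBF
  have hm : KF.card = K.ncard := (Set.ncard_eq_toFinset_card K hK).symm
  have hvcard : BF.card = growth S n := by
    rw [growth_eq]; exact (Set.ncard_eq_toFinset_card _ (gball_finite S n)).symm
  have hvpos : 0 < BF.card := by
    rw [hvcard]; exact growth_pos S n
  set m := KF.card with hmdef
  set v := BF.card with hvdef
  -- each row bound
  have hrow : ∀ x ∈ KF, v ≤ m + (BF.filter (fun g => x * g ∉ K)).card := by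
    intro x hx
    have hin : (BF.filter (fun g => x * g ∈ K)).card ≤ m := by
      apply Finset.card_le_card_of_injOn (fun g => x * g)
      · intro g hg
        simp only [Finset.mem_coe, Finset.mem_filter] at hg
        simp [hKF, hg.2]
      · intro a _ c _ h
        exact mul_left_cancel h
    have := Finset.card_filter_add_card_filter_not (s := BF) (fun g => x * g ∈ K)
    omega
  -- column bound
  have hcol : ∀ g ∈ BF, (KF.filter (fun x => x * g ∉ K)).card ≤ 2 * n * b := by
    intro g hg
    have hgball : g ∈ gball S n := by
      rw [hBF] at hg; simpa using hg
    obtain ⟨l, hlen, hmem, hprod⟩ := hgball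
    have hsub : ↑(KF.filter (fun x => x * g ∉ K)) ⊆ sdiffSet K g := by
      intro x hx
      simp only [Finset.coe_filter, Set.mem_setOf_eq, hKF, Set.Finite.mem_toFinset] at hx
      exact Or.inl ⟨hx.1, hx.2⟩
    calc (KF.filter (fun x => x * g ∉ K)).card
        = (↑(KF.filter (fun x => x * g ∉ K)) : Set Γ).ncard := (Set.ncard_coe_finset _).symm
      _ ≤ (sdiffSet K g).ncard := Set.ncard_le_ncard hsub (sdiffSet_finite hK g)
      _ ≤ 2 * l.length * b := by rw [← hprod]; exact sdiffSet_word S hK l hmem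
      _ ≤ 2 * n * b := by
          have : 2 * l.length ≤ 2 * n := by omega
          exact Nat.mul_le_mul_right b this
  -- double counting
  have hsum : ∑ x ∈ KF, (BF.filter (fun g => x * g ∉ K)).card
      = ∑ g ∈ BF, (KF.filter (fun x => x * g ∉ K)).card := by
    simp only [Finset.card_filter]
    exact Finset.sum_comm
  have hlhs : m * v ≤ m * m + ∑ x ∈ KF, (BF.filter (fun g => x * g ∉ K)).card := by
    calc m * v = ∑ _x ∈ KF, v := by rw [Finset.sum_const, smul_eq_mul]
      _ ≤ ∑ x ∈ KF, (m + (BF.filter (fun g => x * g ∉ K)).card) :=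
          Finset.sum_le_sum hrow
      _ = m * m + ∑ x ∈ KF, (BF.filter (fun g => x * g ∉ K)).card := by
          rw [Finset.sum_add_distrib, Finset.sum_const, smul_eq_mul]
  have hrhs : ∑ g ∈ BF, (KF.filter (fun x => x * g ∉ K)).card ≤ v * (2 * n * b) := by
    calc ∑ g ∈ BF, (KF.filter (fun x => x * g ∉ K)).card
        ≤ ∑ _g ∈ BF, 2 * n * b := Finset.sum_le_sum hcol
      _ = v * (2 * n * b) := by rw [Finset.sum_const, smul_eq_mul]
  have hmain : m * v ≤ m * m + v * (2 * n * b) := by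
    rw [← hsum] at hrhs; omega
  -- conclude
  have h2m : 2 * m ≤ v := by rw [hvcard, hm]; exact hv
  have h1 : 2 * (m * m) ≤ m * v := by
    calc 2 * (m * m) = m * (2 * m) := by ring
      _ ≤ m * v := Nat.mul_le_mul_left m h2m
  have h2 : m * v ≤ v * (4 * n * b) := by
    have := hmain
    nlinarith [h1, hmain]
  have := Nat.le_of_mul_le_mul_left (by calc v * m = m * v := by ring
    _ ≤ v * (4 * n * b) := h2) hvpos
  rw [← hm]; exact this

lemma csc_poly (C d : ℕ) (hC : 0 < C) (hd : 1 ≤ d)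
    (hg : ∀ n : ℕ, 1 ≤ n → n ^ d ≤ C * growth S (C * n))
    {K : Set Γ} (hK : K.Finite) (hm1 : 1 ≤ K.ncard) :
    K.ncard ^ (d - 1) ≤ (4 * C) ^ d * 2 ^ (d + 1) * C
      * ((cayleyGraph S).outerBoundary K).ncard ^ d := by
  set m := K.ncard with hmdef
  set b := ((cayleyGraph S).outerBoundary K).ncard with hbdef
  have hex : ∃ n : ℕ, 1 ≤ n ∧ 2 * C * m ≤ n ^ d := by
    have hpos : 0 < 2 * C * m := Nat.mul_pos (Nat.mul_pos two_pos hC) (by omega)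
    refine ⟨2 * C * m, hpos, Nat.le_self_pow (by omega) _⟩
  set n₀ := Nat.find hex with hn₀
  obtain ⟨h1, h2⟩ := Nat.find_spec hex
  have h3 : n₀ ^ d ≤ 2 ^ d * (2 * C * m) := by
    rcases Nat.lt_or_ge n₀ 2 with h | h
    · have : n₀ = 1 := by omega
      rw [this]
      have hpos : 0 < 2 * C * m := Nat.mul_pos (Nat.mul_pos two_pos hC) (by omega)
      have hpos2 : 0 < 2 ^ d * (2 * C * m) := Nat.mul_pos (Nat.pow_pos two_pos) hpos
      calc 1 ^ d = 1 := one_pow d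
        _ ≤ 2 ^ d * (2 * C * m) := hpos2
    · have hnot : ¬ (1 ≤ n₀ - 1 ∧ 2 * C * m ≤ (n₀ - 1) ^ d) := Nat.find_min hex (by omega)
      have hlt : (n₀ - 1) ^ d < 2 * C * m := by
        by_contra hcon
        exact hnot ⟨by omega, by omega⟩
      calc n₀ ^ d ≤ (2 * (n₀ - 1)) ^ d := Nat.pow_le_pow_left (by omega) d
        _ = 2 ^ d * (n₀ - 1) ^ d := mul_pow 2 _ d
        _ ≤ 2 ^ d * (2 * C * m) := Nat.mul_le_mul_left _ (by omega)
  have hgrow : 2 * m ≤ growth S (C * n₀) := by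
    have := hg n₀ h1
    have h4 : C * (2 * m) ≤ C * growth S (C * n₀) := by
      calc C * (2 * m) = 2 * C * m := by ring
        _ ≤ n₀ ^ d := h2
        _ ≤ C * growth S (C * n₀) := this
    exact Nat.le_of_mul_le_mul_left h4 hC
  have hcsc : m ≤ 4 * (C * n₀) * b := csc S hK (C * n₀) hgrow
  have hpow : m ^ d ≤ ((4 * C) ^ d * 2 ^ (d + 1) * C * b ^ d) * m := by
    calc m ^ d ≤ (4 * (C * n₀) * b) ^ d := Nat.pow_le_pow_left hcsc d
      _ = (4 * C * b) ^ d * n₀ ^ d := by ring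
      _ ≤ (4 * C * b) ^ d * (2 ^ d * (2 * C * m)) := Nat.mul_le_mul_left _ h3
      _ = ((4 * C) ^ d * 2 ^ (d + 1) * C * b ^ d) * m := by ring
  have hmd : m ^ d = m ^ (d - 1) * m := by
    conv_lhs => rw [show d = (d - 1) + 1 by omega]
    rw [pow_succ]
  rw [hmd] at hpow
  exact Nat.le_of_mul_le_mul_right hpow (by omega)

section Game
variable {V : Type*} {G : SimpleGraph V} {f : ℕ → ℕ} {K P : ℕ → Set V}

lemma P_card_bound (st : FireStrategy G f K P) :
    ∀ n, (P n).ncard ≤ ∑ i ∈ Finset.range n, f (i + 1) := by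
  intro n
  induction n with
  | zero => simp [st.protected_zero]
  | succ n ih =>
    have hsub : P (n + 1) ⊆ P n ∪ (P (n + 1) \ P n) := by
      intro x hx
      by_cases h : x ∈ P n
      · exact Or.inl h
      · exact Or.inr ⟨hx, h⟩
    calc (P (n + 1)).ncard ≤ (P n ∪ (P (n + 1) \ P n)).ncard :=
          Set.ncard_le_ncard hsub ((st.protected_finite n).union ((st.protected_finite (n+1)).diff))
      _ ≤ (P n).ncard + (P (n + 1) \ P n).ncard := Set.ncard_union_le _ _
      _ ≤ (∑ i ∈ Finset.range n, f (i + 1)) + f (n + 1) :=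
          Nat.add_le_add ih (st.protected_card n)
      _ = ∑ i ∈ Finset.range (n + 1), f (i + 1) := (Finset.sum_range_succ _ n).symm

lemma fire_growth (st : FireStrategy G f K P) (n : ℕ)
    (hbd : (G.outerBoundary (K n)).Finite) :
    (K (n + 1)).ncard = (K n).ncard + ((G.outerBoundary (K n)) \ P (n + 1)).ncard := by
  rw [st.spread n]
  refine Set.ncard_union_eq ?_ (st.burning_finite n) (hbd.diff)
  rw [Set.disjoint_left]
  rintro x hxK ⟨⟨hxb, -⟩, -⟩
  exact hxb hxK

lemma boundary_count (st : FireStrategy G f K P) (n : ℕ)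
    (hbd : (G.outerBoundary (K n)).Finite) :
    (G.outerBoundary (K n)).ncard
      ≤ ((G.outerBoundary (K n)) \ P (n + 1)).ncard + (P (n + 1)).ncard := by
  have hsub : G.outerBoundary (K n) ⊆ ((G.outerBoundary (K n)) \ P (n + 1)) ∪ P (n + 1) := by
    intro x hx
    by_cases h : x ∈ P (n + 1)
    · exact Or.inr h
    · exact Or.inl ⟨hx, h⟩
  calc (G.outerBoundary (K n)).ncard
      ≤ (((G.outerBoundary (K n)) \ P (n + 1)) ∪ P (n + 1)).ncard :=
        Set.ncard_le_ncard hsub ((hbd.diff).union (st.protected_finite (n+1)))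
    _ ≤ _ := Set.ncard_union_le _ _

lemma contained_boundary (st : FireStrategy G f K P) (N : ℕ) (h : K (N + 1) = K N) :
    G.outerBoundary (K N) ⊆ P (N + 1) := by
  intro x hx
  by_contra hxP
  have hxK : x ∈ K (N + 1) := by
    rw [st.spread N]
    exact Or.inr ⟨hx, hxP⟩
  rw [h] at hxK
  exact hx.1 hxK

end Game

/-- binomial-type bound `(j+1)^(p+1) ≤ j^(p+1) + (p+1)(j+1)^p`. -/
lemma pow_succ_bound (p : ℕ) : ∀ j : ℕ, (j + 1) ^ (p + 1) ≤ j ^ (p + 1) + (p + 1) * (j + 1) ^ p := by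
  induction p with
  | zero => intro j; simp
  | succ p ih =>
    intro j
    calc (j + 1) ^ (p + 2) = (j + 1) * (j + 1) ^ (p + 1) := by rw [← pow_succ']
      _ ≤ (j + 1) * (j ^ (p + 1) + (p + 1) * (j + 1) ^ p) :=
          Nat.mul_le_mul_left _ (ih j)
      _ = j * j ^ (p + 1) + j ^ (p + 1) + (p + 1) * ((j + 1) * (j + 1) ^ p) := by ring
      _ = j ^ (p + 2) + j ^ (p + 1) + (p + 1) * (j + 1) ^ (p + 1) := by
          rw [← pow_succ', ← pow_succ']
      _ ≤ j ^ (p + 2) + (j + 1) ^ (p + 1) + (p + 1) * (j + 1) ^ (p + 1) := by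
          have := Nat.pow_le_pow_left (show j ≤ j + 1 by omega) (p + 1)
          omega
      _ = j ^ (p + 2) + (p + 2) * (j + 1) ^ (p + 1) := by ring

end FFaux

/-- **Corollary 2.** Let `G` be a Cayley graph of superpolynomial growth
(`v(n) ⪰ n^d` for every integer `d ≥ 2`; in particular any group of intermediate
growth). Then `G` does not satisfy polynomial containment of any degree: for every
`k` and every `f = O(n^k)`, `G` does not satisfy `{f(n)}`-containment. -/
theorem firefighter_superpolynomial_growth {Γ : Type*} [Group Γ] (S : Finset Γ)
    (hS_symm : ∀ s ∈ S, s⁻¹ ∈ S)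
    (hS_gen : Subgroup.closure (S : Set Γ) = ⊤)
    (hgrowth : ∀ d : ℕ, 2 ≤ d → ∃ C : ℕ, 0 < C ∧
      ∀ n : ℕ, 1 ≤ n → (n : ℝ) ^ d ≤ (C : ℝ) * growth S (C * n)) :
    ∀ (k : ℕ) (f : ℕ → ℕ),
      (fun n => (f n : ℝ)) =O[atTop] (fun n => (n : ℝ) ^ k) →
      ¬ HasContainment (cayleyGraph S) f := by
  intro k f hf hcont
  classical
  -- Step A: a pointwise polynomial bound `f n ≤ A * n ^ k` for `n ≥ 1`
  rw [Asymptotics.isBigO_iff] at hf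
  obtain ⟨c, hc⟩ := hf
  rw [Filter.eventually_atTop] at hc
  obtain ⟨n₁, hc⟩ := hc
  set A := ⌈c⌉₊ + (Finset.range (n₁ + 1)).sup f with hA
  have hfA : ∀ n, 1 ≤ n → f n ≤ A * n ^ k := by
    intro n hn
    have hnk1 : 1 ≤ n ^ k := Nat.one_le_pow _ _ (by omega)
    rcases le_or_gt n₁ n with h | h
    · have h0 := hc n h
      rw [Real.norm_eq_abs, Real.norm_eq_abs,
        abs_of_nonneg (by positivity : (0:ℝ) ≤ ((f n : ℕ):ℝ)),
        abs_of_nonneg (by positivity : (0:ℝ) ≤ ((n:ℝ))^k)] at h0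
      have h2 : ((f n : ℕ) : ℝ) ≤ ((⌈c⌉₊ * n ^ k : ℕ) : ℝ) := by
        push_cast
        calc ((f n : ℕ) : ℝ) ≤ c * (n:ℝ)^k := h0
          _ ≤ (⌈c⌉₊ : ℝ) * (n:ℝ)^k :=
              mul_le_mul_of_nonneg_right (Nat.le_ceil c) (by positivity)
      have h4 : f n ≤ ⌈c⌉₊ * n ^ k := by exact_mod_cast h2
      have h5 : ⌈c⌉₊ ≤ A := by omega
      calc f n ≤ ⌈c⌉₊ * n ^ k := h4
        _ ≤ A * n ^ k := Nat.mul_le_mul_right _ h5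
    · have hfn : f n ≤ (Finset.range (n₁ + 1)).sup f :=
        Finset.le_sup (by simp; omega)
      calc f n ≤ A := by omega
        _ = A * 1 := (mul_one A).symm
        _ ≤ A * n ^ k := Nat.mul_le_mul_left A hnk1
  -- Step B: parameters
  set d := 2 * (k + 2) with hd
  obtain ⟨C, hC, hgR⟩ := hgrowth d (by omega)
  have hgN : ∀ n, 1 ≤ n → n ^ d ≤ C * growth S (C * n) := by
    intro n hn; exact_mod_cast hgR n hn
  set C' := (4 * C) ^ d * 2 ^ (d + 1) * C with hC'
  have hC'pos : 0 < C' := by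
    rw [hC']; positivity
  set Q := A + 2 + (k + 2) with hQ
  set E := C' * Q ^ d * 2 ^ ((k + 2) * (2 * (k + 1))) with hE
  set M₀ := E + 1 with hM₀
  -- choose a big initial ball
  obtain ⟨C₂, hC₂, hg2⟩ := hgrowth 2 (le_refl 2)
  have hEx : ∃ r, M₀ ≤ growth S r := by
    have hpos : 1 ≤ C₂ * M₀ := Nat.one_le_iff_ne_zero.mpr (by positivity)
    have h := hg2 (C₂ * M₀) hpos
    have hN2 : (C₂ * M₀) ^ 2 ≤ C₂ * growth S (C₂ * (C₂ * M₀)) := by exact_mod_cast h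
    refine ⟨C₂ * (C₂ * M₀), ?_⟩
    have h1 : C₂ * M₀ ≤ (C₂ * M₀) ^ 2 := Nat.le_self_pow two_ne_zero _
    exact Nat.le_of_mul_le_mul_left (le_trans h1 hN2) hC₂
  obtain ⟨r, hr⟩ := hEx
  -- launch the game on the ball of radius r
  obtain ⟨K, P, hK0, st, N, hN⟩ := hcont (FFaux.gball S r) (FFaux.gball_finite S r)
  set m₀ := growth S r with hm₀
  have hm₀M : M₀ ≤ m₀ := hr
  have hm₀1 : 1 ≤ m₀ := by omega
  have hK0card : (K 0).ncard = m₀ := by rw [hK0]; exact (FFaux.growth_eq S r).symm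
  have hbd : ∀ n, ((cayleyGraph S).outerBoundary (K n)).Finite :=
    fun n => FFaux.boundary_finite S (st.burning_finite n)
  -- protected set bound
  have hPb : ∀ j : ℕ, (P (j + 1)).ncard ≤ A * (j + 1) ^ (k + 1) := by
    intro j
    calc (P (j + 1)).ncard ≤ ∑ i ∈ Finset.range (j + 1), f (i + 1) :=
          FFaux.P_card_bound st (j + 1)
      _ ≤ ∑ _i ∈ Finset.range (j + 1), A * (j + 1) ^ k := by
          refine Finset.sum_le_sum fun i hi => ?_
          simp only [Finset.mem_range] at hi
          calc f (i + 1) ≤ A * (i + 1) ^ k := hfA (i + 1) (by omega)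
            _ ≤ A * (j + 1) ^ k :=
                Nat.mul_le_mul_left A (Nat.pow_le_pow_left (by omega) k)
      _ = (j + 1) * (A * (j + 1) ^ k) := by
          rw [Finset.sum_const, Finset.card_range, smul_eq_mul]
      _ = A * (j + 1) ^ (k + 1) := by ring
  -- boundary lower bound, given a fire-size lower bound
  have hbnd : ∀ j, m₀ + j ^ (k + 2) ≤ (K j).ncard →
      Q * (j + 1) ^ (k + 1) ≤ ((cayleyGraph S).outerBoundary (K j)).ncard := by
    intro j hj
    set mj := (K j).ncard with hmj
    set bj := ((cayleyGraph S).outerBoundary (K j)).ncard with hbj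
    have hm0le : m₀ ≤ mj := le_trans (Nat.le_add_right _ _) hj
    have hm1 : 1 ≤ mj := le_trans hm₀1 hm0le
    have hiso : mj ^ (d - 1) ≤ C' * bj ^ d := by
      have h := FFaux.csc_poly S C d hC (by omega) hgN (st.burning_finite j) hm1
      rw [hC']
      exact h
    have h2m : (j + 1) ^ (k + 2) ≤ 2 ^ (k + 2) * mj := by
      rcases Nat.eq_zero_or_pos j with rfl | hjpos
      · have hz : 0 < 2 ^ (k + 2) * mj := Nat.mul_pos (Nat.pow_pos two_pos) (by omega)
        have h1 : (0 + 1) ^ (k + 2) = 1 := by simp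
        omega
      · have hjp : j ^ (k + 2) ≤ mj := le_trans (Nat.le_add_left _ _) hj
        calc (j + 1) ^ (k + 2) ≤ (2 * j) ^ (k + 2) := Nat.pow_le_pow_left (by omega) _
          _ = 2 ^ (k + 2) * j ^ (k + 2) := mul_pow 2 j (k + 2)
          _ ≤ 2 ^ (k + 2) * mj := Nat.mul_le_mul_left _ hjp
    have hEmj : E ≤ mj := by omega
    have hkey : C' * (Q * (j + 1) ^ (k + 1)) ^ d ≤ C' * bj ^ d := by
      calc C' * (Q * (j + 1) ^ (k + 1)) ^ d
          = C' * Q ^ d * ((j + 1) ^ (k + 2)) ^ (2 * (k + 1)) := by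
            rw [mul_pow, ← pow_mul, ← pow_mul]
            rw [show (k + 1) * d = (k + 2) * (2 * (k + 1)) by rw [hd]; ring]
            ring
        _ ≤ C' * Q ^ d * (2 ^ (k + 2) * mj) ^ (2 * (k + 1)) :=
            Nat.mul_le_mul_left _ (Nat.pow_le_pow_left h2m _)
        _ = E * mj ^ (2 * (k + 1)) := by
            rw [mul_pow, ← pow_mul, hE]; ring
        _ ≤ mj * mj ^ (2 * (k + 1)) := Nat.mul_le_mul_right _ hEmj
        _ = mj ^ (d - 1) := by
            rw [show d - 1 = 2 * (k + 1) + 1 by omega, pow_succ]; ring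
        _ ≤ C' * bj ^ d := hiso
    have hdle := Nat.le_of_mul_le_mul_left hkey hC'pos
    exact (Nat.pow_le_pow_iff_left (by omega : d ≠ 0)).mp hdle
  -- fire grows at least like j^(k+2)
  have hgrow : ∀ j, m₀ + j ^ (k + 2) ≤ (K j).ncard := by
    intro j
    induction j with
    | zero => rw [hK0card]; simp
    | succ j ih =>
      have hb := hbnd j ih
      have hrec := FFaux.fire_growth st j (hbd j)
      have hcount := FFaux.boundary_count st j (hbd j)
      have hP := hPb j
      have hQX : Q * (j + 1) ^ (k + 1)
          = A * (j + 1) ^ (k + 1) + (k + 2) * (j + 1) ^ (k + 1) + 2 * (j + 1) ^ (k + 1) := by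
        rw [hQ]; ring
      rw [hQX] at hb
      have hbin : (j + 1) ^ (k + 2) ≤ j ^ (k + 2) + (k + 2) * (j + 1) ^ (k + 1) :=
        FFaux.pow_succ_bound (k + 1) j
      omega
  -- containment gives the contradiction
  have hfix : K (N + 1) = K N := hN (N + 1) (by omega)
  have hsubP := FFaux.contained_boundary st N hfix
  have hble : ((cayleyGraph S).outerBoundary (K N)).ncard ≤ (P (N + 1)).ncard :=
    Set.ncard_le_ncard hsubP (st.protected_finite (N + 1))
  have h1 := hbnd N (hgrow N)
  have h2 := hPb N
  have hone : 1 ≤ (N + 1) ^ (k + 1) := Nat.one_le_pow _ _ (by omega)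
  have hQX : Q * (N + 1) ^ (k + 1)
      = A * (N + 1) ^ (k + 1) + (k + 4) * (N + 1) ^ (k + 1) := by
    rw [hQ]; ring
  rw [hQX] at h1
  have ho : 1 ≤ (k + 4) * (N + 1) ^ (k + 1) :=
    le_trans hone (Nat.le_mul_of_pos_left _ (by omega))
  omega
end

section
/- Let c > 0 and d ≥ 2 be real numbers, and let g : ℕ → [0,∞) satisfy g(n) = o(n^{d-1}). Then there exist constants F, R > 0 (depending only on c, d and g) such that every sequence (k_n) of nonnegative reals satisfying k_{n+1} ≥ k_n + c·k_n^{(d-1)/d} − g(n) for all n ≥ 0 and k_0 > (F/R)^d satisfies k_n ≥ ((n+F)/R)^d for all n ≥ 0; in particular k_n → ∞. -/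
open Filter Real

/-- Auxiliary: `(t+1)^d - t^d ≤ d·2^{d-1}·t^{d-1}` for `t ≥ 1`, `d ≥ 2`. -/
lemma rpow_succ_sub_le (d t : ℝ) (hd : 2 ≤ d) (ht : 1 ≤ t) :
    (t+1) ^ d - t ^ d ≤ d * 2 ^ (d-1) * t ^ (d-1) := by
  have ht0 : (0:ℝ) < t := by linarith
  have ht1 : (0:ℝ) < t + 1 := by linarith
  have hber := one_add_mul_self_le_rpow_one_add (s := -(1/(t+1))) (by
      rw [neg_le, neg_neg]; rw [div_le_one ht1]; linarith) (p := d) (by linarith)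
  have hmul := mul_le_mul_of_nonneg_left hber (le_of_lt (Real.rpow_pos_of_pos ht1 d))
  have heq : (t+1) ^ d * (1 + -(1/(t+1))) ^ d = t ^ d := by
    rw [← Real.mul_rpow (by positivity) (by
        rw [← sub_eq_add_neg, sub_nonneg, div_le_one ht1]; linarith)]
    congr 1
    field_simp
    ring
  rw [heq] at hmul
  have h2 : (t+1) ^ d * (1 + d * -(1/(t+1))) = (t+1)^d - d * (t+1)^(d-1) := by
    rw [Real.rpow_sub_one (by positivity)]
    field_simp
    ring
  rw [h2] at hmul
  have h3 : (t+1) ^ (d-1) ≤ 2 ^ (d-1) * t ^ (d-1) := by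
    rw [← Real.mul_rpow (by norm_num) (le_of_lt ht0)]
    exact Real.rpow_le_rpow (by positivity) (by linarith) (by linarith)
  nlinarith [Real.rpow_pos_of_pos ht1 (d-1), hd]

/-- **Recursion lemma, polynomial case.** Let `c > 0`, `d ≥ 2` be reals and let
`g : ℕ → [0,∞)` satisfy `g(n) = o(n^{d-1})`. Then there are `F, R > 0` (depending only
on `c`, `d` and `g`) such that any sequence of nonnegative reals with
`k_{n+1} ≥ k_n + c k_n^{(d-1)/d} − g(n)` and `k_0 > (F/R)^d` satisfies
`k_n ≥ ((n+F)/R)^d` for all `n`; in particular `k_n → ∞`. -/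
theorem recursion_polynomial (c d : ℝ) (hc : 0 < c) (hd : 2 ≤ d)
    (g : ℕ → ℝ) (hg0 : ∀ n, 0 ≤ g n)
    (hg : (fun n => g n) =o[atTop] fun n => (n : ℝ) ^ (d - 1)) :
    ∃ F R : ℝ, 0 < F ∧ 0 < R ∧
      ∀ k : ℕ → ℝ, (∀ n, 0 ≤ k n) →
        (∀ n : ℕ, k n + c * (k n) ^ ((d - 1) / d) - g n ≤ k (n + 1)) →
        (F / R) ^ d < k 0 →
        (∀ n : ℕ, (((n : ℝ) + F) / R) ^ d ≤ k n) ∧ Tendsto k atTop atTop := by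
  have hdpos : (0:ℝ) < d := by linarith
  have hd1 : (1:ℝ) ≤ d - 1 := by linarith
  set R : ℝ := max 1 (d * 2 ^ d / c) with hRdef
  have hR1 : (1:ℝ) ≤ R := le_max_left _ _
  have hRpos : (0:ℝ) < R := lt_of_lt_of_le one_pos hR1
  have hRc : d * 2 ^ d / c ≤ R := le_max_right _ _
  have hRc' : d * 2 ^ d ≤ c * R := by
    rw [div_le_iff₀ hc] at hRc; linarith
  have hε : (0:ℝ) < (c/2) / R ^ (d-1) :=
    div_pos (by linarith) (Real.rpow_pos_of_pos hRpos _)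
  obtain ⟨N, hN⟩ := Filter.eventually_atTop.mp (hg.def hε)
  set M : ℝ := ∑ i ∈ Finset.range N, g i with hMdef
  have hM0 : (0:ℝ) ≤ M := Finset.sum_nonneg fun i _ => hg0 i
  set F : ℝ := R * max 1 (2 * M / c + 1) with hFdef
  have hmax1 : (1:ℝ) ≤ max 1 (2 * M / c + 1) := le_max_left _ _
  have hF1 : (1:ℝ) ≤ F := by
    calc (1:ℝ) = 1 * 1 := by ring
    _ ≤ R * max 1 (2 * M / c + 1) := by
        apply mul_le_mul hR1 hmax1 (by norm_num) (by linarith)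
  have hFpos : (0:ℝ) < F := by linarith
  refine ⟨F, R, hFpos, hRpos, ?_⟩
  intro k hknn hrec hk0
  -- (⋆) g n ≤ (c/2) * ((n+F)/R)^(d-1)
  have star : ∀ n : ℕ, g n ≤ c / 2 * (((n:ℝ) + F) / R) ^ (d-1) := by
    intro n
    have htpos : (0:ℝ) < (n:ℝ) + F := by positivity
    rcases le_or_gt N n with hn | hn
    · have h := hN n hn
      rw [Real.norm_eq_abs, Real.norm_eq_abs, abs_of_nonneg (hg0 n),
        abs_of_nonneg (Real.rpow_nonneg (Nat.cast_nonneg n) _)] at h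
      calc g n ≤ c / 2 / R ^ (d-1) * (n:ℝ) ^ (d-1) := h
      _ = c / 2 * ((n:ℝ) / R) ^ (d-1) := by
          rw [Real.div_rpow (Nat.cast_nonneg n) hRpos.le]; ring
      _ ≤ c / 2 * (((n:ℝ) + F) / R) ^ (d-1) := by
          apply mul_le_mul_of_nonneg_left _ (by linarith)
          gcongr
          linarith
    · have hgM : g n ≤ M :=
        Finset.single_le_sum (fun i _ => hg0 i) (Finset.mem_range.mpr hn)
      have hFR : F / R = max 1 (2 * M / c + 1) := by
        rw [hFdef]; field_simp
      have h1 : 2 * M / c ≤ (F / R) ^ (d-1) := by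
        rw [hFR]
        calc 2 * M / c ≤ max 1 (2 * M / c + 1) := by
              have := le_max_right (1:ℝ) (2 * M / c + 1); linarith
        _ = max 1 (2 * M / c + 1) ^ (1:ℝ) := (Real.rpow_one _).symm
        _ ≤ max 1 (2 * M / c + 1) ^ (d-1) :=
            Real.rpow_le_rpow_of_exponent_le hmax1 hd1
      have h2 : (F / R) ^ (d-1) ≤ (((n:ℝ) + F) / R) ^ (d-1) := by
        gcongr
        have : (0:ℝ) ≤ (n:ℝ) := Nat.cast_nonneg n
        linarith
      calc g n ≤ M := hgM
      _ = c / 2 * (2 * M / c) := by field_simp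
      _ ≤ c / 2 * (((n:ℝ) + F) / R) ^ (d-1) := by
          apply mul_le_mul_of_nonneg_left (le_trans h1 h2) (by linarith)
  -- (⋆⋆) step inequality for t ≥ 1
  have starstar : ∀ t : ℝ, 1 ≤ t →
      ((t+1)/R) ^ d ≤ (t/R) ^ d + c / 2 * (t/R) ^ (d-1) := by
    intro t ht
    have ht0 : (0:ℝ) < t := by linarith
    have key := rpow_succ_sub_le d t hd ht
    have hRd : R ^ d = R ^ (d-1) * R := by
      rw [Real.rpow_sub_one (ne_of_gt hRpos)]; field_simp
    have h2d : (2:ℝ) ^ d = 2 ^ (d-1) * 2 := by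
      rw [Real.rpow_sub_one (by norm_num : (2:ℝ) ≠ 0)]; field_simp
    have hA : (0:ℝ) < t ^ (d-1) := Real.rpow_pos_of_pos ht0 _
    have hRdpos : (0:ℝ) < R ^ d := Real.rpow_pos_of_pos hRpos _
    have hRd1 : (0:ℝ) < R ^ (d-1) := Real.rpow_pos_of_pos hRpos _
    rw [Real.div_rpow (by linarith) hRpos.le, Real.div_rpow ht0.le hRpos.le,
      Real.div_rpow ht0.le hRpos.le]
    have e1 : t ^ d / R ^ d + c / 2 * (t ^ (d-1) / R ^ (d-1))
        = (t ^ d + c / 2 * t ^ (d-1) * R) / R ^ d := by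
      rw [hRd]; field_simp
    rw [e1, div_le_div_iff₀ hRdpos hRdpos]
    have hd2R : d * (2 ^ (d-1) * 2) ≤ c * R := by rw [← h2d]; exact hRc'
    have hmn : 0 ≤ (c * R - 2 * (d * 2 ^ (d-1))) * t ^ (d-1) :=
      mul_nonneg (by linarith) hA.le
    have hstep : (t+1) ^ d ≤ t ^ d + c / 2 * t ^ (d-1) * R := by
      nlinarith [key, hmn]
    exact mul_le_mul_of_nonneg_right hstep hRdpos.le
  have key : ∀ n : ℕ, (((n:ℝ) + F) / R) ^ d ≤ k n := by
    intro n
    induction n with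
    | zero => simpa using hk0.le
    | succ m ih =>
      have htm : (1:ℝ) ≤ (m:ℝ) + F := by
        have : (0:ℝ) ≤ (m:ℝ) := Nat.cast_nonneg m; linarith
      have htpos : (0:ℝ) < ((m:ℝ) + F) / R := by positivity
      have hmono : (((m:ℝ) + F) / R) ^ d + c * ((((m:ℝ) + F) / R) ^ d) ^ ((d-1)/d)
          ≤ k m + c * (k m) ^ ((d-1)/d) := by
        have h1 : ((((m:ℝ) + F) / R) ^ d) ^ ((d-1)/d) ≤ (k m) ^ ((d-1)/d) :=
          Real.rpow_le_rpow (Real.rpow_nonneg htpos.le _) ih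
            (by positivity)
        nlinarith
      have hcollapse : ((((m:ℝ) + F) / R) ^ d) ^ ((d-1)/d) = (((m:ℝ) + F) / R) ^ (d-1) := by
        rw [← Real.rpow_mul htpos.le]
        congr 1
        rw [mul_comm, div_mul_cancel₀ _ (ne_of_gt hdpos)]
      rw [hcollapse] at hmono
      have hstep := starstar ((m:ℝ) + F) htm
      have hg' := star m
      have := hrec m
      push_cast
      calc (((m:ℝ) + 1 + F) / R) ^ d = ((((m:ℝ) + F) + 1) / R) ^ d := by
            congr 2; ring
      _ ≤ (((m:ℝ) + F)/R) ^ d + c/2 * (((m:ℝ) + F)/R) ^ (d-1) := hstep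
      _ ≤ (((m:ℝ) + F)/R) ^ d + c * (((m:ℝ) + F)/R) ^ (d-1) - g m := by
            have hT : (0:ℝ) ≤ (((m:ℝ) + F)/R) ^ (d-1) :=
              Real.rpow_nonneg htpos.le _
            nlinarith
      _ ≤ k m + c * (k m) ^ ((d-1)/d) - g m := by linarith
      _ ≤ k (m + 1) := hrec m
  refine ⟨key, ?_⟩
  apply tendsto_atTop_mono key
  apply (tendsto_rpow_atTop hdpos).comp
  apply Tendsto.atTop_div_const hRpos
  exact tendsto_atTop_add_const_right _ F tendsto_natCast_atTop_atTop
end
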